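/- Let f ∈ ℂ[X] have degree m ≥ 1, leading coefficient a_m and coefficient a_{m−1} of X^{m−1}, and let σ_1, …, σ_m ∈ ℂ be pairwise distinct. Define the defects d_k = f(σ_k) / (a_m · ∏_{j ≠ k} (σ_k − σ_j)) and the main values H_k = σ_k − d_k. Then the control equation Σ_{j=1}^m H_j = −a_{m−1}/a_m holds. -/

import Mathlib

open Polynomial BigOperators Finset

theorem ecp_sum_control {m : ℕ} (hm : 1 ≤ m) (f : Polynomial ℂ)
    (hdeg : f.natDegree = m) (σ : Fin m → ℂ) (hσ : Function.Injective σ)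
    (d H : Fin m → ℂ)
    (hd : ∀ k, d k = f.eval (σ k) /
        (f.leadingCoeff * ∏ j ∈ Finset.univ.erase k, (σ k - σ j)))
    (hH : ∀ k, H k = σ k - d k) :
    ∑ k, H k = -f.coeff (m - 1) / f.leadingCoeff := by
  have hf0 : f ≠ 0 := fun h => by simp [h] at hdeg; omega
  set a := f.leadingCoeff with ha
  have ha0 : a ≠ 0 := leadingCoeff_ne_zero.mpr hf0
  have hinj : Set.InjOn σ (univ : Finset (Fin m)) := hσ.injOn
  have hcard : #(univ : Finset (Fin m)) = m := by simp
  set g : Polynomial ℂ := C a * Lagrange.nodal univ σ with hg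
  have hgdeg : g.degree = (m : WithBot ℕ) := by
    rw [hg, degree_C_mul ha0, Lagrange.degree_nodal, hcard]
  have hfdeg : f.degree = (m : WithBot ℕ) := by
    rw [degree_eq_natDegree hf0, hdeg]
  have hlc : g.leadingCoeff = a := by
    rw [hg, leadingCoeff_mul, leadingCoeff_C, (Lagrange.nodal_monic).leadingCoeff, mul_one]
  have hsub : (f - g).degree < (#(univ : Finset (Fin m)) : WithBot ℕ) := by
    rw [hcard, ← hfdeg]
    exact degree_sub_lt (hfdeg.trans hgdeg.symm) hf0 hlc.symm
  have heval : ∀ i ∈ (univ : Finset (Fin m)), (f - g).eval (σ i) = f.eval (σ i) := by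
    intro i _
    simp [hg, Lagrange.eval_nodal_at_node (mem_univ i)]
  have hinterp := Lagrange.eq_interpolate_of_eval_eq (r := fun i => f.eval (σ i)) hinj hsub heval
  -- take coefficient m-1
  have hP : ∀ k : Fin m, (∏ j ∈ univ.erase k, (σ k - σ j)) ≠ 0 := by
    intro k
    refine prod_ne_zero_iff.mpr fun j hj => sub_ne_zero.mpr fun h => ?_
    exact (mem_erase.mp hj).1 (hσ h.symm)
  have hbasis : ∀ k : Fin m, (Lagrange.basis univ σ k).coeff (m - 1)
      = (∏ j ∈ univ.erase k, (σ k - σ j))⁻¹ := by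
    intro k
    have hnd : (Lagrange.basis univ σ k).natDegree = m - 1 := by
      rw [Lagrange.natDegree_basis hinj (mem_univ k), hcard]
    rw [← hnd, ← leadingCoeff, Lagrange.basis, leadingCoeff_prod, ← prod_inv_distrib]
    refine prod_congr rfl fun j hj => ?_
    have hne : σ k ≠ σ j := fun h => (mem_erase.mp hj).1 (hσ h.symm)
    rw [Lagrange.basisDivisor, leadingCoeff_mul, leadingCoeff_C,
      (monic_X_sub_C (σ j)).leadingCoeff, mul_one]
  have hnodal : (Lagrange.nodal univ σ).coeff (m - 1) = -∑ j, σ j := by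
    have h1 := prod_X_sub_C_nextCoeff (s := (univ : Finset (Fin m))) (f := σ)
    rw [← Lagrange.nodal_eq] at h1
    rwa [nextCoeff, if_neg (by rw [Lagrange.natDegree_nodal, hcard]; omega),
      Lagrange.natDegree_nodal, hcard] at h1
  have hkey : f.coeff (m - 1) + a * ∑ j, σ j
      = ∑ k, f.eval (σ k) * (∏ j ∈ univ.erase k, (σ k - σ j))⁻¹ := by
    have := congrArg (fun p => p.coeff (m - 1)) hinterp
    simp only [coeff_sub, hg, coeff_C_mul, hnodal, Lagrange.interpolate_apply,
      finset_sum_coeff, coeff_C_mul, hbasis] at this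
    linear_combination this
  have hdsum : ∑ k, d k = a⁻¹ * f.coeff (m - 1) + ∑ j, σ j := by
    have : ∑ k, d k = a⁻¹ * ∑ k, f.eval (σ k) * (∏ j ∈ univ.erase k, (σ k - σ j))⁻¹ := by
      rw [mul_sum]
      refine sum_congr rfl fun k _ => ?_
      rw [hd k, div_eq_mul_inv, mul_inv]
      ring
    rw [this, ← hkey]
    field_simp
  calc ∑ k, H k = ∑ k, (σ k - d k) := by simp [hH]
    _ = ∑ k, σ k - ∑ k, d k := by rw [sum_sub_distrib]
    _ = -f.coeff (m - 1) / a := by rw [hdsum]; field_simp; ring
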